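/- For q ∈ [0,2], the extended Jensen-Tsallis kernel k_q(x,y) = (1/(q-1)) Σ_j ((x(j)+y(j))^q − x(j)^q − y(j)^q) (for q ≠ 1; with the limiting form Σ_j ((x(j)+y(j))ln(x(j)+y(j)) − x(j)ln x(j) − y(j)ln y(j)) at q = 1) is a positive semi-definite kernel on [0,1]^d. -/

import Mathlib

open MeasureTheory Set Real

private lemma int_helper {f : ℝ → ℝ} (hf : ContinuousOn f (Set.Ioi 0))
    {p₁ p₂ c₁ c₂ : ℝ} (hp₁ : -1 < p₁) (hp₂ : p₂ < -1)
    (h₁ : ∀ x ∈ Set.Ioc (0:ℝ) 1, |f x| ≤ c₁ * x ^ p₁)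
    (h₂ : ∀ x ∈ Set.Ioi (1:ℝ), |f x| ≤ c₂ * x ^ p₂) :
    MeasureTheory.IntegrableOn f (Set.Ioi 0) := by
  have hunion : Set.Ioc (0:ℝ) 1 ∪ Set.Ioi 1 = Set.Ioi 0 := Set.Ioc_union_Ioi_eq_Ioi zero_le_one
  rw [← hunion]
  refine MeasureTheory.IntegrableOn.union ?_ ?_
  · have hint : MeasureTheory.IntegrableOn (fun x : ℝ => c₁ * x ^ p₁) (Set.Ioc 0 1) := by
      have h := (intervalIntegral.intervalIntegrable_rpow' (a := 0) (b := 1) hp₁)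
      rw [intervalIntegrable_iff_integrableOn_Ioc_of_le zero_le_one] at h
      exact h.const_mul _
    refine MeasureTheory.Integrable.mono hint ((hf.mono Set.Ioc_subset_Ioi_self).aestronglyMeasurable measurableSet_Ioc) ?_
    filter_upwards [MeasureTheory.ae_restrict_mem measurableSet_Ioc] with x hx
    rw [Real.norm_eq_abs, Real.norm_eq_abs]
    exact (h₁ x hx).trans (le_abs_self _)
  · have hint : MeasureTheory.IntegrableOn (fun x : ℝ => c₂ * x ^ p₂) (Set.Ioi 1) :=
      (integrableOn_Ioi_rpow_of_lt hp₂ one_pos).const_mul _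
    refine MeasureTheory.Integrable.mono hint ((hf.mono (Set.Ioi_subset_Ioi zero_le_one)).aestronglyMeasurable
      measurableSet_Ioi) ?_
    filter_upwards [MeasureTheory.ae_restrict_mem measurableSet_Ioi] with x hx
    rw [Real.norm_eq_abs, Real.norm_eq_abs]
    exact (h₂ x hx).trans (le_abs_self _)

private lemma one_sub_exp_nonneg {u : ℝ} (hu : 0 ≤ u) : 0 ≤ 1 - Real.exp (-u) := by
  have : Real.exp (-u) ≤ 1 := Real.exp_le_one_iff.mpr (by linarith)
  linarith

private lemma one_sub_exp_le_one {u : ℝ} : 1 - Real.exp (-u) ≤ 1 := by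
  linarith [Real.exp_pos (-u)]

private lemma one_sub_exp_le {u : ℝ} : 1 - Real.exp (-u) ≤ u := by
  linarith [Real.add_one_le_exp (-u)]

private lemma expm_nonneg (u : ℝ) : 0 ≤ Real.exp (-u) - 1 + u := by
  linarith [Real.add_one_le_exp (-u)]

private lemma expm_le {u : ℝ} (hu : 0 ≤ u) :
    Real.exp (-u) - 1 + u ≤ u * (1 - Real.exp (-u)) := by
  rw [Real.exp_neg]
  have he : 0 < Real.exp u := Real.exp_pos u
  have h1 : 1 + u ≤ Real.exp u := by linarith [Real.add_one_le_exp u]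
  have h2 : (1 + u) * (Real.exp u)⁻¹ ≤ 1 := by
    calc (1 + u) * (Real.exp u)⁻¹ ≤ Real.exp u * (Real.exp u)⁻¹ :=
          mul_le_mul_of_nonneg_right h1 (inv_nonneg.mpr he.le)
      _ = 1 := mul_inv_cancel₀ he.ne'
  nlinarith

private lemma contOn_rpow (p : ℝ) : ContinuousOn (fun x : ℝ => x ^ p) (Set.Ioi 0) :=
  fun x hx => (Real.continuousAt_rpow_const x p (Or.inl (ne_of_gt hx))).continuousWithinAt

private lemma rpow_nn {x : ℝ} (hx : x ∈ Set.Ioi (0:ℝ)) (p : ℝ) : 0 ≤ x ^ p :=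
  Real.rpow_nonneg (le_of_lt hx) p

private lemma x_mul_rpow {x : ℝ} (hx : 0 < x) (q : ℝ) : x * x ^ (-q-1) = x ^ (-q) := by
  nth_rewrite 1 [← Real.rpow_one x]
  rw [← Real.rpow_add hx]; norm_num

private lemma intP {q : ℝ} (hq0 : 0 < q) (hq2 : q < 2) {s t : ℝ} (hs : 0 ≤ s) (ht : 0 ≤ t) :
    MeasureTheory.IntegrableOn
      (fun l : ℝ => (1 - Real.exp (-(l*s))) * (1 - Real.exp (-(l*t))) * l ^ (-q-1))
      (Set.Ioi 0) := by
  have hcont : ContinuousOn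
      (fun l : ℝ => (1 - Real.exp (-(l*s))) * (1 - Real.exp (-(l*t))) * l ^ (-q-1))
      (Set.Ioi 0) := by
    apply ContinuousOn.mul _ (contOn_rpow _)
    fun_prop
  refine int_helper hcont (p₁ := 1 - q) (p₂ := -q-1) (c₁ := s*t) (c₂ := 1)
    (by linarith) (by linarith) ?_ ?_
  · intro x hx
    have hx0 : 0 < x := hx.1
    have h1 : 0 ≤ 1 - Real.exp (-(x*s)) := one_sub_exp_nonneg (by positivity)
    have h2 : 0 ≤ 1 - Real.exp (-(x*t)) := one_sub_exp_nonneg (by positivity)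
    have hr : 0 ≤ x ^ (-q-1) := Real.rpow_nonneg hx0.le _
    rw [abs_of_nonneg (by positivity)]
    have key : (1 - Real.exp (-(x*s))) * (1 - Real.exp (-(x*t))) ≤ (x*s) * (x*t) :=
      mul_le_mul one_sub_exp_le one_sub_exp_le h2 (by positivity)
    calc (1 - Real.exp (-(x*s))) * (1 - Real.exp (-(x*t))) * x ^ (-q-1)
        ≤ (x*s) * (x*t) * x ^ (-q-1) := mul_le_mul_of_nonneg_right key hr
      _ = s * t * (x * (x * x ^ (-q-1))) := by ring
      _ = s * t * x ^ (1-q) := by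
          have h3 : x * x ^ (-q-1) = x ^ (-q) := x_mul_rpow hx0 q
          have h4 : x * x ^ (-q:ℝ) = x ^ (1-q) := by
            nth_rewrite 1 [← Real.rpow_one x]
            rw [← Real.rpow_add hx0]; ring_nf
          rw [h3, h4]
  · intro x hx
    have hx0 : (0:ℝ) < x := lt_trans one_pos hx
    have h1 : 0 ≤ 1 - Real.exp (-(x*s)) := one_sub_exp_nonneg (by positivity)
    have h2 : 0 ≤ 1 - Real.exp (-(x*t)) := one_sub_exp_nonneg (by positivity)
    have hr : 0 ≤ x ^ (-q-1) := Real.rpow_nonneg hx0.le _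
    rw [abs_of_nonneg (by positivity)]
    have key : (1 - Real.exp (-(x*s))) * (1 - Real.exp (-(x*t))) ≤ 1 :=
      mul_le_one₀ one_sub_exp_le_one h2 one_sub_exp_le_one
    calc (1 - Real.exp (-(x*s))) * (1 - Real.exp (-(x*t))) * x ^ (-q-1)
        ≤ 1 * x ^ (-q-1) := mul_le_mul_of_nonneg_right key hr
      _ = 1 * x ^ (-q-1) := rfl

private lemma x_mul_rpow' {x : ℝ} (hx : 0 < x) (q : ℝ) : x * x ^ (-q) = x ^ (1-q) := by
  nth_rewrite 1 [← Real.rpow_one x]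
  rw [← Real.rpow_add hx]; ring_nf

private lemma intA {q : ℝ} (hq0 : 0 < q) (hq1 : q < 1) {t : ℝ} (ht : 0 ≤ t) :
    MeasureTheory.IntegrableOn
      (fun l : ℝ => (1 - Real.exp (-(l*t))) * l ^ (-q-1)) (Set.Ioi 0) := by
  have hcont : ContinuousOn (fun l : ℝ => (1 - Real.exp (-(l*t))) * l ^ (-q-1)) (Set.Ioi 0) := by
    apply ContinuousOn.mul _ (contOn_rpow _)
    fun_prop
  refine int_helper hcont (p₁ := -q) (p₂ := -q-1) (c₁ := t) (c₂ := 1)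
    (by linarith) (by linarith) ?_ ?_
  · intro x hx
    have hx0 : 0 < x := hx.1
    have h1 : 0 ≤ 1 - Real.exp (-(x*t)) := one_sub_exp_nonneg (by positivity)
    have hr : 0 ≤ x ^ (-q-1) := Real.rpow_nonneg hx0.le _
    rw [abs_of_nonneg (by positivity)]
    calc (1 - Real.exp (-(x*t))) * x ^ (-q-1)
        ≤ (x*t) * x ^ (-q-1) := mul_le_mul_of_nonneg_right one_sub_exp_le hr
      _ = t * (x * x ^ (-q-1)) := by ring
      _ = t * x ^ (-q) := by rw [x_mul_rpow hx0]
  · intro x hx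
    have hx0 : (0:ℝ) < x := lt_trans one_pos hx
    have h1 : 0 ≤ 1 - Real.exp (-(x*t)) := one_sub_exp_nonneg (by positivity)
    have hr : 0 ≤ x ^ (-q-1) := Real.rpow_nonneg hx0.le _
    rw [abs_of_nonneg (by positivity)]
    calc (1 - Real.exp (-(x*t))) * x ^ (-q-1)
        ≤ 1 * x ^ (-q-1) := mul_le_mul_of_nonneg_right one_sub_exp_le_one hr
      _ = 1 * x ^ (-q-1) := rfl

private lemma intB {q : ℝ} (hq1 : 1 < q) (hq2 : q < 2) {t : ℝ} (ht : 0 ≤ t) :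
    MeasureTheory.IntegrableOn
      (fun l : ℝ => (Real.exp (-(l*t)) - 1 + l*t) * l ^ (-q-1)) (Set.Ioi 0) := by
  have hcont : ContinuousOn (fun l : ℝ => (Real.exp (-(l*t)) - 1 + l*t) * l ^ (-q-1))
      (Set.Ioi 0) := by
    apply ContinuousOn.mul _ (contOn_rpow _)
    fun_prop
  refine int_helper hcont (p₁ := 1-q) (p₂ := -q) (c₁ := t*t) (c₂ := t)
    (by linarith) (by linarith) ?_ ?_
  · intro x hx
    have hx0 : 0 < x := hx.1
    have h1 : 0 ≤ Real.exp (-(x*t)) - 1 + x*t := expm_nonneg _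
    have hr : 0 ≤ x ^ (-q-1) := Real.rpow_nonneg hx0.le _
    rw [abs_of_nonneg (by positivity)]
    have key : Real.exp (-(x*t)) - 1 + x*t ≤ (x*t) * (x*t) := by
      calc Real.exp (-(x*t)) - 1 + x*t ≤ (x*t) * (1 - Real.exp (-(x*t))) := expm_le (by positivity)
        _ ≤ (x*t) * (x*t) := mul_le_mul_of_nonneg_left one_sub_exp_le (by positivity)
    calc (Real.exp (-(x*t)) - 1 + x*t) * x ^ (-q-1)
        ≤ (x*t) * (x*t) * x ^ (-q-1) := mul_le_mul_of_nonneg_right key hr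
      _ = t * t * (x * (x * x ^ (-q-1))) := by ring
      _ = t * t * x ^ (1-q) := by rw [x_mul_rpow hx0, x_mul_rpow' hx0]
  · intro x hx
    have hx0 : (0:ℝ) < x := lt_trans one_pos hx
    have h1 : 0 ≤ Real.exp (-(x*t)) - 1 + x*t := expm_nonneg _
    have hr : 0 ≤ x ^ (-q-1) := Real.rpow_nonneg hx0.le _
    rw [abs_of_nonneg (by positivity)]
    have key : Real.exp (-(x*t)) - 1 + x*t ≤ x*t := by
      have : Real.exp (-(x*t)) ≤ 1 := Real.exp_le_one_iff.mpr (neg_nonpos.mpr (by positivity))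
      linarith
    calc (Real.exp (-(x*t)) - 1 + x*t) * x ^ (-q-1)
        ≤ (x*t) * x ^ (-q-1) := mul_le_mul_of_nonneg_right key hr
      _ = t * (x * x ^ (-q-1)) := by ring
      _ = t * x ^ (-q) := by rw [x_mul_rpow hx0]

private lemma scale {q : ℝ} (hq0 : 0 < q) {F : ℝ → ℝ} (hF0 : F 0 = 0) {t : ℝ} (ht : 0 ≤ t) :
    ∫ l in Set.Ioi (0:ℝ), F (l*t) * l ^ (-q-1)
      = t ^ q * ∫ l in Set.Ioi (0:ℝ), F l * l ^ (-q-1) := by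
  rcases eq_or_lt_of_le ht with h | h
  · rw [← h]
    simp [hF0, Real.zero_rpow hq0.ne']
  · set G := fun y : ℝ => F y * y ^ (-q-1) with hG
    have key := MeasureTheory.integral_comp_mul_right_Ioi G 0 h
    rw [zero_mul] at key
    have hc : Set.EqOn (fun l : ℝ => F (l*t) * l ^ (-q-1))
        (fun l : ℝ => t ^ (q+1) * G (l*t)) (Set.Ioi 0) := by
      intro l hl
      have hl0 : (0:ℝ) < l := hl
      simp only [hG]
      rw [Real.mul_rpow hl0.le h.le]
      have ht1 : t ^ (q+1) * t ^ (-q-1) = 1 := by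
        rw [← Real.rpow_add h]; norm_num
      calc F (l*t) * l ^ (-q-1)
          = F (l*t) * (l ^ (-q-1) * (t ^ (q+1) * t ^ (-q-1))) := by rw [ht1]; ring
        _ = t ^ (q+1) * (F (l*t) * (l ^ (-q-1) * t ^ (-q-1))) := by ring
    rw [MeasureTheory.setIntegral_congr_fun measurableSet_Ioi hc,
      MeasureTheory.integral_const_mul, key, smul_eq_mul]
    have ht2 : t ^ (q+1) * t⁻¹ = t ^ q := by
      rw [show t⁻¹ = t ^ (-1:ℝ) by rw [Real.rpow_neg h.le, Real.rpow_one],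
        ← Real.rpow_add h]
      norm_num
    rw [← mul_assoc, ht2]

private lemma int_pos {f : ℝ → ℝ} (hpos : ∀ l ∈ Set.Ioi (0:ℝ), 0 < f l)
    (hint : MeasureTheory.IntegrableOn f (Set.Ioi 0)) :
    0 < ∫ l in Set.Ioi (0:ℝ), f l := by
  rw [MeasureTheory.setIntegral_pos_iff_support_of_nonneg_ae ?_ hint]
  · refine lt_of_lt_of_le ?_ (MeasureTheory.measure_mono (fun l hl => ⟨(hpos l hl).ne', hl⟩))
    rw [Real.volume_Ioi]
    simp
  · filter_upwards [MeasureTheory.ae_restrict_mem measurableSet_Ioi] with l hl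
    exact (hpos l hl).le

private lemma I1_pos {q : ℝ} (hq0 : 0 < q) (hq1 : q < 1) :
    0 < ∫ l in Set.Ioi (0:ℝ), (1 - Real.exp (-l)) * l ^ (-q-1) := by
  refine int_pos (fun l hl => ?_) ?_
  swap
  · have h := intA hq0 hq1 (t := 1) zero_le_one
    simp only [mul_one] at h
    exact h
  have hl0 : (0:ℝ) < l := hl
  have h1 : Real.exp (-l) < 1 := by
    rw [← Real.exp_zero]
    exact Real.exp_lt_exp.mpr (by linarith)
  exact mul_pos (by linarith) (Real.rpow_pos_of_pos hl0 _)

private lemma J1_pos {q : ℝ} (hq1 : 1 < q) (hq2 : q < 2) :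
    0 < ∫ l in Set.Ioi (0:ℝ), (Real.exp (-l) - 1 + l) * l ^ (-q-1) := by
  refine int_pos (fun l hl => ?_) ?_
  swap
  · have h := intB hq1 hq2 (t := 1) zero_le_one
    simp only [mul_one] at h
    exact h
  have hl0 : (0:ℝ) < l := hl
  have h1 : -l + 1 < Real.exp (-l) := Real.add_one_lt_exp (by linarith)
  exact mul_pos (by linarith) (Real.rpow_pos_of_pos hl0 _)

private lemma pair_repr {q : ℝ} (hq0 : 0 < q) (hq2 : q < 2) (hq1 : q ≠ 1) :
    ∃ C : ℝ, 0 < C ∧ ∀ s t : ℝ, 0 ≤ s → 0 ≤ t →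
      (1 / (q-1)) * ((s+t) ^ q - s ^ q - t ^ q)
        = C * ∫ l in Set.Ioi (0:ℝ),
            (1 - Real.exp (-(l*s))) * (1 - Real.exp (-(l*t))) * l ^ (-q-1) := by
  rcases lt_or_gt_of_ne hq1 with hlt | hgt
  · set I1 := ∫ l in Set.Ioi (0:ℝ), (1 - Real.exp (-l)) * l ^ (-q-1) with hI1
    have hI1pos := I1_pos hq0 hlt
    refine ⟨((1-q) * I1)⁻¹, inv_pos.mpr (mul_pos (by linarith) hI1pos), ?_⟩
    intro s t hs ht
    have hsum : 0 ≤ s + t := by linarith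
    have hfun : (fun l : ℝ => (1 - Real.exp (-(l*s))) * (1 - Real.exp (-(l*t))) * l ^ (-q-1))
        = fun l : ℝ => ((1 - Real.exp (-(l*s))) * l ^ (-q-1)
            + (1 - Real.exp (-(l*t))) * l ^ (-q-1))
            - (1 - Real.exp (-(l*(s+t)))) * l ^ (-q-1) := by
      funext l
      have h : Real.exp (-(l*(s+t))) = Real.exp (-(l*s)) * Real.exp (-(l*t)) := by
        rw [← Real.exp_add]; ring_nf
      rw [h]; ring
    have hintS := intA hq0 hlt hs
    have hintT := intA hq0 hlt ht
    have hintST := intA hq0 hlt hsum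
    have hS := scale hq0 (F := fun u => 1 - Real.exp (-u)) (by simp) hs
    have hT := scale hq0 (F := fun u => 1 - Real.exp (-u)) (by simp) ht
    have hST := scale hq0 (F := fun u => 1 - Real.exp (-u)) (by simp) hsum
    have hval : (∫ l in Set.Ioi (0:ℝ),
          (1 - Real.exp (-(l*s))) * (1 - Real.exp (-(l*t))) * l ^ (-q-1))
        = s ^ q * I1 + t ^ q * I1 - (s+t) ^ q * I1 := by
      have hintSum : MeasureTheory.IntegrableOn
          (fun l : ℝ => (1 - Real.exp (-(l*s))) * l ^ (-q-1)
            + (1 - Real.exp (-(l*t))) * l ^ (-q-1)) (Set.Ioi 0) := hintS.add hintT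
      rw [hfun, MeasureTheory.integral_sub hintSum hintST,
        MeasureTheory.integral_add hintS hintT, hS, hT, hST]
    rw [hval]
    have h1 : I1 ≠ 0 := ne_of_gt hI1pos
    have h2 : (1:ℝ) - q ≠ 0 := by intro h; apply hq1; linarith
    have h3 : q - 1 ≠ 0 := sub_ne_zero.mpr hq1
    field_simp
    ring
  · set J1 := ∫ l in Set.Ioi (0:ℝ), (Real.exp (-l) - 1 + l) * l ^ (-q-1) with hJ1
    have hJ1pos := J1_pos hgt hq2
    refine ⟨((q-1) * J1)⁻¹, inv_pos.mpr (mul_pos (by linarith) hJ1pos), ?_⟩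
    intro s t hs ht
    have hsum : 0 ≤ s + t := by linarith
    have hfun : (fun l : ℝ => (1 - Real.exp (-(l*s))) * (1 - Real.exp (-(l*t))) * l ^ (-q-1))
        = fun l : ℝ => ((Real.exp (-(l*(s+t))) - 1 + l*(s+t)) * l ^ (-q-1)
            - (Real.exp (-(l*s)) - 1 + l*s) * l ^ (-q-1))
            - (Real.exp (-(l*t)) - 1 + l*t) * l ^ (-q-1) := by
      funext l
      have h : Real.exp (-(l*(s+t))) = Real.exp (-(l*s)) * Real.exp (-(l*t)) := by
        rw [← Real.exp_add]; ring_nf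
      rw [h]; ring
    have hintS := intB hgt hq2 hs
    have hintT := intB hgt hq2 ht
    have hintST := intB hgt hq2 hsum
    have hS := scale hq0 (F := fun u => Real.exp (-u) - 1 + u) (by simp) hs
    have hT := scale hq0 (F := fun u => Real.exp (-u) - 1 + u) (by simp) ht
    have hST := scale hq0 (F := fun u => Real.exp (-u) - 1 + u) (by simp) hsum
    have hval : (∫ l in Set.Ioi (0:ℝ),
          (1 - Real.exp (-(l*s))) * (1 - Real.exp (-(l*t))) * l ^ (-q-1))
        = (s+t) ^ q * J1 - s ^ q * J1 - t ^ q * J1 := by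
      have hintDiff : MeasureTheory.IntegrableOn
          (fun l : ℝ => (Real.exp (-(l*(s+t))) - 1 + l*(s+t)) * l ^ (-q-1)
            - (Real.exp (-(l*s)) - 1 + l*s) * l ^ (-q-1)) (Set.Ioi 0) := hintST.sub hintS
      rw [hfun, MeasureTheory.integral_sub hintDiff hintT,
        MeasureTheory.integral_sub hintST hintS, hS, hT, hST]
    rw [hval]
    have h1 : J1 ≠ 0 := ne_of_gt hJ1pos
    have h3 : q - 1 ≠ 0 := sub_ne_zero.mpr hq1
    field_simp

private lemma coord_psd {q : ℝ} (hq0 : 0 < q) (hq2 : q < 2) (hq1 : q ≠ 1)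
    {N : ℕ} (s : Fin N → ℝ) (hs : ∀ i, 0 ≤ s i) (c : Fin N → ℝ) :
    0 ≤ ∑ i, ∑ j, c i * c j *
      ((1 / (q-1)) * ((s i + s j) ^ q - (s i) ^ q - (s j) ^ q)) := by
  obtain ⟨C, hC, hrep⟩ := pair_repr hq0 hq2 hq1
  have hint : ∀ i j : Fin N, MeasureTheory.IntegrableOn
      (fun l : ℝ => (c i * c j * C) *
        ((1 - Real.exp (-(l * s i))) * (1 - Real.exp (-(l * s j))) * l ^ (-q-1)))
      (Set.Ioi 0) := fun i j => (intP hq0 hq2 (hs i) (hs j)).const_mul _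
  have step1 : ∀ i j : Fin N,
      c i * c j * ((1/(q-1)) * ((s i + s j)^q - (s i)^q - (s j)^q))
      = ∫ l in Set.Ioi (0:ℝ), (c i * c j * C) *
          ((1 - Real.exp (-(l * s i))) * (1 - Real.exp (-(l * s j))) * l ^ (-q-1)) := by
    intro i j
    rw [MeasureTheory.integral_const_mul, hrep _ _ (hs i) (hs j)]
    ring
  have keypos : (0:ℝ) ≤ ∫ l in Set.Ioi (0:ℝ), ∑ i : Fin N, ∑ j : Fin N,
      (c i * c j * C) *
        ((1 - Real.exp (-(l * s i))) * (1 - Real.exp (-(l * s j))) * l ^ (-q-1)) := by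
    apply MeasureTheory.setIntegral_nonneg measurableSet_Ioi
    intro l hl
    have hw : 0 ≤ l ^ (-q-1) := Real.rpow_nonneg (le_of_lt hl) _
    have hexp : (∑ i : Fin N, ∑ j : Fin N, (c i * c j * C) *
        ((1 - Real.exp (-(l * s i))) * (1 - Real.exp (-(l * s j))) * l ^ (-q-1)))
        = C * l ^ (-q-1) *
          ((∑ i : Fin N, c i * (1 - Real.exp (-(l * s i))))
            * (∑ i : Fin N, c i * (1 - Real.exp (-(l * s i))))) := by
      rw [Finset.sum_mul_sum, Finset.mul_sum]
      apply Finset.sum_congr rfl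
      intro i _
      rw [Finset.mul_sum]
      apply Finset.sum_congr rfl
      intro j _
      ring
    rw [hexp]
    exact mul_nonneg (mul_nonneg hC.le hw) (mul_self_nonneg _)
  have swap1 : (∫ l in Set.Ioi (0:ℝ), ∑ i : Fin N, ∑ j : Fin N,
      (c i * c j * C) *
        ((1 - Real.exp (-(l * s i))) * (1 - Real.exp (-(l * s j))) * l ^ (-q-1)))
      = ∑ i : Fin N, ∑ j : Fin N, ∫ l in Set.Ioi (0:ℝ), (c i * c j * C) *
          ((1 - Real.exp (-(l * s i))) * (1 - Real.exp (-(l * s j))) * l ^ (-q-1)) := by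
    rw [MeasureTheory.integral_finset_sum _
      (fun i _ => MeasureTheory.integrable_finset_sum _ (fun j _ => hint i j))]
    apply Finset.sum_congr rfl
    intro i _
    rw [MeasureTheory.integral_finset_sum _ (fun j _ => hint i j)]
  rw [show (∑ i : Fin N, ∑ j : Fin N, c i * c j *
      ((1 / (q-1)) * ((s i + s j) ^ q - (s i) ^ q - (s j) ^ q)))
      = ∑ i : Fin N, ∑ j : Fin N, ∫ l in Set.Ioi (0:ℝ), (c i * c j * C) *
          ((1 - Real.exp (-(l * s i))) * (1 - Real.exp (-(l * s j))) * l ^ (-q-1)) from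
    Finset.sum_congr rfl (fun i _ => Finset.sum_congr rfl (fun j _ => step1 i j))]
  rw [← swap1]
  exact keypos

private lemma swap_sum {N d : ℕ} (c : Fin N → ℝ) (F : Fin N → Fin N → Fin d → ℝ) (r : ℝ) :
    ∑ i, ∑ j, c i * c j * (r * ∑ k, F i j k)
      = ∑ k, ∑ i, ∑ j, c i * c j * (r * F i j k) := by
  simp only [Finset.mul_sum]
  rw [show (∑ i : Fin N, ∑ j : Fin N, ∑ k : Fin d, c i * c j * (r * F i j k))
      = ∑ i : Fin N, ∑ k : Fin d, ∑ j : Fin N, c i * c j * (r * F i j k) from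
    Finset.sum_congr rfl fun i _ => Finset.sum_comm]
  exact Finset.sum_comm

private lemma hasDerivAt_rpow_base {t : ℝ} (ht : 0 ≤ t) :
    HasDerivAt (fun p : ℝ => t ^ p) (t * Real.log t) 1 := by
  rcases eq_or_lt_of_le ht with h | h
  · rw [← h]
    have heq : (fun p : ℝ => (0:ℝ) ^ p) =ᶠ[nhds (1:ℝ)] fun _ => (0:ℝ) := by
      filter_upwards [Ioi_mem_nhds (by norm_num : (0:ℝ) < 1)] with p hp
      exact Real.zero_rpow (ne_of_gt hp)
    have h0 : HasDerivAt (fun _ : ℝ => (0:ℝ)) 0 1 := hasDerivAt_const 1 0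
    have := h0.congr_of_eventuallyEq heq
    simpa using this
  · have heq : (fun p : ℝ => t ^ p) = fun p : ℝ => Real.exp (Real.log t * p) := by
      funext p
      rw [Real.rpow_def_of_pos h]
    rw [heq]
    have h1 : HasDerivAt (fun p : ℝ => Real.log t * p) (Real.log t) 1 := by
      simpa using (hasDerivAt_id (1:ℝ)).const_mul (Real.log t)
    have h2 := h1.exp
    simpa [Real.exp_log h] using h2

noncomputable def jtKernel (d : ℕ) (q : ℝ) (x y : Fin d → ℝ) : ℝ :=
  if q = 1 then
    ∑ j, ((x j + y j) * Real.log (x j + y j)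
      - x j * Real.log (x j) - y j * Real.log (y j))
  else (1 / (q - 1)) * ∑ j, ((x j + y j) ^ q - (x j) ^ q - (y j) ^ q)

theorem jt_kernel_psd (d : ℕ) (q : ℝ) (hq : q ∈ Set.Icc (0:ℝ) 2)
    (N : ℕ) (x : Fin N → Fin d → ℝ)
    (hx : ∀ i j, x i j ∈ Set.Icc (0:ℝ) 1) (c : Fin N → ℝ) :
    0 ≤ ∑ i, ∑ j, c i * c j * jtKernel d q (x i) (x j) := by
  obtain ⟨hq0, hq2⟩ := hq
  have hxnn : ∀ i k, 0 ≤ x i k := fun i k => (hx i k).1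
  have main : ∀ p : ℝ, 0 < p → p < 2 → p ≠ 1 →
      0 ≤ ∑ i, ∑ j, c i * c j * jtKernel d p (x i) (x j) := by
    intro p h0 h2 h1
    simp only [jtKernel, if_neg h1]
    rw [swap_sum c (fun i j k => (x i k + x j k) ^ p - (x i k) ^ p - (x j k) ^ p) (1/(p-1))]
    apply Finset.sum_nonneg
    intro k _
    exact coord_psd h0 h2 h1 (fun i => x i k) (fun i => hxnn i k) c
  rcases eq_or_lt_of_le hq0 with hq0e | hq0p
  · -- q = 0
    have hk : ∀ i j : Fin N, jtKernel d q (x i) (x j) = (d:ℝ) := by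
      intro i j
      rw [jtKernel, if_neg (by rw [← hq0e]; norm_num)]
      rw [← hq0e]
      simp [Real.rpow_zero]
    rw [Finset.sum_congr rfl (fun i _ => Finset.sum_congr rfl (fun j _ => by rw [hk i j]))]
    have hrw : (∑ i : Fin N, ∑ j : Fin N, c i * c j * (d:ℝ))
        = (d:ℝ) * ((∑ i : Fin N, c i) * (∑ j : Fin N, c j)) := by
      rw [Finset.sum_mul_sum, Finset.mul_sum]
      refine Finset.sum_congr rfl fun i _ => ?_
      rw [Finset.mul_sum]
      exact Finset.sum_congr rfl fun j _ => by ring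
    rw [hrw]
    exact mul_nonneg (Nat.cast_nonneg d) (mul_self_nonneg _)
  rcases eq_or_lt_of_le hq2 with hq2e | hq2p
  · -- q = 2
    have hk : ∀ i j : Fin N, jtKernel d q (x i) (x j)
        = (1:ℝ) * ∑ k, (2 * (x i k * x j k)) := by
      intro i j
      rw [jtKernel, if_neg (by rw [hq2e]; norm_num), hq2e]
      rw [show (1:ℝ)/(2-1) = 1 by norm_num]
      rw [one_mul, one_mul]
      refine Finset.sum_congr rfl fun k _ => ?_
      have h2 : ∀ a : ℝ, a ^ (2:ℝ) = a ^ (2:ℕ) := fun a => by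
        rw [← Real.rpow_natCast a 2]; norm_num
      rw [h2, h2, h2]
      ring
    rw [Finset.sum_congr rfl (fun i _ => Finset.sum_congr rfl (fun j _ => by rw [hk i j]))]
    rw [swap_sum c (fun i j k => 2 * (x i k * x j k)) 1]
    apply Finset.sum_nonneg
    intro k _
    have hrw : (∑ i : Fin N, ∑ j : Fin N, c i * c j * ((1:ℝ) * (2 * (x i k * x j k))))
        = 2 * ((∑ i : Fin N, c i * x i k) * (∑ j : Fin N, c j * x j k)) := by
      rw [Finset.sum_mul_sum, Finset.mul_sum]
      refine Finset.sum_congr rfl fun i _ => ?_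
      rw [Finset.mul_sum]
      exact Finset.sum_congr rfl fun j _ => by ring
    rw [hrw]
    exact mul_nonneg (by norm_num) (mul_self_nonneg _)
  by_cases hq1 : q = 1
  · -- q = 1 : limit of the case q ∈ (1,2)
    subst hq1
    set T : ℝ → ℝ := fun p => ∑ i, ∑ j, c i * c j *
      (∑ k, ((x i k + x j k) ^ p - (x i k) ^ p - (x j k) ^ p)) with hTdef
    have hT1 : T 1 = 0 := by
      simp only [hTdef, Real.rpow_one]
      have : ∀ i j : Fin N,
          (∑ k, ((x i k + x j k) - (x i k) - (x j k))) = 0 :=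
        fun i j => Finset.sum_eq_zero fun k _ => by ring
      simp only [this, mul_zero, Finset.sum_const_zero]
    set D : ℝ := ∑ i, ∑ j, c i * c j *
      (∑ k, ((x i k + x j k) * Real.log (x i k + x j k)
        - x i k * Real.log (x i k) - x j k * Real.log (x j k))) with hDdef
    have hT : HasDerivAt T D 1 := by
      rw [hTdef, hDdef]
      apply HasDerivAt.fun_sum
      intro i _
      apply HasDerivAt.fun_sum
      intro j _
      refine HasDerivAt.const_mul (c i * c j) ?_
      apply HasDerivAt.fun_sum
      intro k _
      exact ((hasDerivAt_rpow_base (add_nonneg (hxnn i k) (hxnn j k))).sub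
        (hasDerivAt_rpow_base (hxnn i k))).sub (hasDerivAt_rpow_base (hxnn j k))
    have htends : Filter.Tendsto (slope T 1) (nhdsWithin 1 (Set.Ioi 1)) (nhds D) :=
      (hasDerivAt_iff_tendsto_slope.mp hT).mono_left
        (nhdsWithin_mono 1 fun p hp => Set.mem_compl_singleton_iff.mpr (ne_of_gt hp))
    have hev : ∀ᶠ p in nhdsWithin (1:ℝ) (Set.Ioi 1), 0 ≤ slope T 1 p := by
      filter_upwards [Ioo_mem_nhdsGT_of_mem
        (Set.mem_Ico.mpr ⟨le_refl (1:ℝ), one_lt_two⟩)] with p hp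
      have h1 : p ≠ 1 := ne_of_gt hp.1
      rw [slope_def_field, hT1, sub_zero]
      have hmain := main p (by linarith [hp.1]) hp.2 h1
      have heq : (∑ i, ∑ j, c i * c j * jtKernel d p (x i) (x j)) = T p / (p - 1) := by
        simp only [jtKernel, if_neg h1, hTdef]
        rw [eq_div_iff (sub_ne_zero.mpr h1), Finset.sum_mul]
        refine Finset.sum_congr rfl fun i _ => ?_
        rw [Finset.sum_mul]
        refine Finset.sum_congr rfl fun j _ => ?_
        field_simp
      rw [← heq]
      exact hmain
    have hfinal : 0 ≤ D := ge_of_tendsto htends hev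
    have hgoal : (∑ i, ∑ j, c i * c j * jtKernel d 1 (x i) (x j)) = D := by
      simp only [jtKernel, hDdef, eq_self_iff_true, if_true]
    rw [hgoal]
    exact hfinal
  · exact main q hq0p hq2p hq1
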